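/- Let χ = (P₁,P₂,P₃,0) be a Pseudo Type-n vector field in ℝ⁴, i.e., P₁, P₂, P₃ ∈ ℝ[x₁,x₂,x₃,x₄] are homogeneous polynomials of degree n and P₄ = 0. Then χ is a vector field on S²×S¹ if and only if there exist polynomials A, B, C ∈ ℝ[x₁,x₂,x₃,x₄] such that P₁ = A·x₂ + B·x₃, P₂ = −A·x₁ + C·x₃ and P₃ = −B·x₁ − C·x₂. -/

import Mathlib

open MvPolynomial

/-- The action of the polynomial vector field `χ = (P 0, P 1, P 2, P 3)` on a polynomial:
`χf = Σᵢ Pᵢ ∂f/∂xᵢ`. -/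
noncomputable def chi (P : Fin 4 → MvPolynomial (Fin 4) ℝ)
    (f : MvPolynomial (Fin 4) ℝ) : MvPolynomial (Fin 4) ℝ :=
  ∑ i, P i * pderiv i f

/-- `G_b = (x₁² + x₂² + x₃² - b²)² + x₄² - 1`, whose zero set is `S² × S¹`. -/
noncomputable def Gb (b : ℝ) : MvPolynomial (Fin 4) ℝ :=
  (X 0 ^ 2 + X 1 ^ 2 + X 2 ^ 2 - C (b ^ 2)) ^ 2 + X 3 ^ 2 - 1

lemma split_var (i : Fin 4) (p : MvPolynomial (Fin 4) ℝ) :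
    ∃ q, p = X i * q + aeval (fun j => if j = i then (0 : MvPolynomial (Fin 4) ℝ) else X j) p := by
  induction p using MvPolynomial.induction_on with
  | C a => exact ⟨0, by simp⟩
  | add p r hp hr =>
    obtain ⟨q, hq⟩ := hp
    obtain ⟨s, hs⟩ := hr
    exact ⟨q + s, by rw [map_add]; linear_combination hq + hs⟩
  | mul_X p j hp =>
    obtain ⟨q, hq⟩ := hp
    by_cases h : j = i
    · subst h
      refine ⟨q * X j + aeval (fun k => if k = j then (0 : MvPolynomial (Fin 4) ℝ) else X k) p, ?_⟩
      rw [map_mul, aeval_X, if_pos rfl, mul_zero]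
      linear_combination (X j) * hq
    · refine ⟨q * X j, ?_⟩
      rw [map_mul, aeval_X, if_neg h]
      linear_combination (X j) * hq

lemma koszul (p0 p1 p2 : MvPolynomial (Fin 4) ℝ)
    (h : X 0 * p0 + X 1 * p1 + X 2 * p2 = 0) :
    ∃ A B C' : MvPolynomial (Fin 4) ℝ,
      p0 = A * X 1 + B * X 2 ∧ p1 = -A * X 0 + C' * X 2 ∧ p2 = -B * X 0 - C' * X 1 := by
  obtain ⟨q1, hq1⟩ := split_var 0 p1
  obtain ⟨q2, hq2⟩ := split_var 0 p2
  set φ0 : MvPolynomial (Fin 4) ℝ →ₐ[ℝ] MvPolynomial (Fin 4) ℝ :=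
    aeval (fun j => if j = (0 : Fin 4) then (0 : MvPolynomial (Fin 4) ℝ) else X j) with hφ0
  set r1 := φ0 p1 with hr1def
  set r2 := φ0 p2 with hr2def
  have h0 : X 1 * r1 + X 2 * r2 = 0 := by
    have hc := congrArg φ0 h
    simpa [map_add, map_mul, aeval_X, hφ0, hr1def, hr2def] using hc
  obtain ⟨E, hE⟩ := split_var 1 r2
  set φ1 : MvPolynomial (Fin 4) ℝ →ₐ[ℝ] MvPolynomial (Fin 4) ℝ :=
    aeval (fun j => if j = (1 : Fin 4) then (0 : MvPolynomial (Fin 4) ℝ) else X j) with hφ1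
  have hr2' : φ1 r2 = 0 := by
    have hc := congrArg φ1 h0
    have h2 : X 2 * φ1 r2 = 0 := by simpa [map_add, map_mul, aeval_X, hφ1] using hc
    rcases mul_eq_zero.mp h2 with h' | h'
    · exact absurd h' (MvPolynomial.X_ne_zero _)
    · exact h'
  rw [hr2', add_zero] at hE
  have hr1 : r1 = -(X 2 * E) := by
    have hx : X 1 * r1 = X 1 * (-(X 2 * E)) := by linear_combination h0 - X 2 * hE
    exact mul_left_cancel₀ (MvPolynomial.X_ne_zero _) hx
  have hz : X 0 * (p0 + X 1 * q1 + X 2 * q2) = 0 := by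
    linear_combination h - X 1 * hq1 - X 2 * hq2 - X 1 * hr1 - X 2 * hE
  have hz' : p0 + X 1 * q1 + X 2 * q2 = 0 := by
    rcases mul_eq_zero.mp hz with h' | h'
    · exact absurd h' (MvPolynomial.X_ne_zero _)
    · exact h'
  exact ⟨-q1, -q2, -E, by linear_combination hz', by linear_combination hq1 + hr1,
    by linear_combination hq2 + hE⟩

/-- The "scaling" map sending `xᵢ` to `xᵢ·t`. -/
noncomputable def psi : MvPolynomial (Fin 4) ℝ →ₐ[ℝ] Polynomial (MvPolynomial (Fin 4) ℝ) :=
  aeval (fun i => Polynomial.C (X i) * Polynomial.X)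

lemma psi_homog {p : MvPolynomial (Fin 4) ℝ} {d : ℕ} (h : p.IsHomogeneous d) :
    psi p = Polynomial.C p * Polynomial.X ^ d := by
  conv_lhs => rw [p.as_sum]
  conv_rhs => rw [p.as_sum]
  rw [map_sum, map_sum, Finset.sum_mul]
  refine Finset.sum_congr rfl fun m hm => ?_
  have hdeg : m.degree = d := by
    by_contra hne
    exact (mem_support_iff.mp hm) (h.coeff_eq_zero hne)
  rw [psi, aeval_monomial, monomial_eq]
  have hprod : (m.prod fun i k => (Polynomial.C (X i : MvPolynomial (Fin 4) ℝ) * Polynomial.X) ^ k)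
      = Polynomial.C (m.prod fun i k => (X i : MvPolynomial (Fin 4) ℝ) ^ k)
        * Polynomial.X ^ m.degree := by
    rw [Finsupp.prod, Finsupp.prod, Finsupp.degree]
    simp only [mul_pow, ← Polynomial.C_pow]
    rw [Finset.prod_mul_distrib, ← map_prod, Finset.prod_pow_eq_pow_sum]
    rfl
  rw [hprod, hdeg]
  have halg : (algebraMap ℝ (Polynomial (MvPolynomial (Fin 4) ℝ))) (coeff m p)
      = Polynomial.C (C (coeff m p)) := by
    rw [IsScalarTower.algebraMap_apply ℝ (MvPolynomial (Fin 4) ℝ)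
      (Polynomial (MvPolynomial (Fin 4) ℝ))]
    rfl
  rw [halg, map_mul]
  ring

lemma psi_C (r : ℝ) : psi (C r) = Polynomial.C (C r) := by
  rw [psi, aeval_C, IsScalarTower.algebraMap_apply ℝ (MvPolynomial (Fin 4) ℝ)
    (Polynomial (MvPolynomial (Fin 4) ℝ))]
  rfl

theorem stmt_17 (b : ℝ) (hb : 1 < b) (n : ℕ) (P : Fin 4 → MvPolynomial (Fin 4) ℝ)
    (hhom : (P 0).IsHomogeneous n ∧ (P 1).IsHomogeneous n ∧ (P 2).IsHomogeneous n)
    (hP4 : P 3 = 0) :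
    (∃ K : MvPolynomial (Fin 4) ℝ, chi P (Gb b) = K * Gb b) ↔
      ∃ A B C' : MvPolynomial (Fin 4) ℝ,
        P 0 = A * X 1 + B * X 2 ∧
        P 1 = -A * X 0 + C' * X 2 ∧
        P 2 = -B * X 0 - C' * X 1 := by
  have hchi : chi P (Gb b) = 4 * (X 0 ^ 2 + X 1 ^ 2 + X 2 ^ 2 - C (b ^ 2))
      * (X 0 * P 0 + X 1 * P 1 + X 2 * P 2) := by
    simp [chi, Gb, Fin.sum_univ_four, hP4, pderiv_pow, pderiv_X, Pi.single_apply]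
    ring
  constructor
  · rintro ⟨K, hK⟩
    rw [hchi] at hK
    set r2 : MvPolynomial (Fin 4) ℝ := X 0 ^ 2 + X 1 ^ 2 + X 2 ^ 2 with hr2def
    set S : MvPolynomial (Fin 4) ℝ := X 0 * P 0 + X 1 * P 1 + X 2 * P 2 with hSdef
    obtain ⟨h0, h1, h2⟩ := hhom
    have hr2hom : r2.IsHomogeneous 2 := by
      have : ∀ i : Fin 4, ((X i : MvPolynomial (Fin 4) ℝ) ^ 2).IsHomogeneous 2 := fun i => by
        simpa using (isHomogeneous_X ℝ i).pow 2
      exact ((this 0).add (this 1)).add (this 2)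
    have hShom : S.IsHomogeneous (n + 1) := by
      have hx : ∀ (p : MvPolynomial (Fin 4) ℝ) (i : Fin 4), p.IsHomogeneous n →
          ((X i : MvPolynomial (Fin 4) ℝ) * p).IsHomogeneous (n + 1) := fun p i hp => by
        have := (isHomogeneous_X ℝ i).mul hp
        rwa [add_comm] at this
      exact ((hx _ 0 h0).add (hx _ 1 h1)).add (hx _ 2 h2)
    have hS0 : S = 0 := by
      by_contra hSne
      have hmain : Polynomial.C (4 * r2 * S) * Polynomial.X ^ (n + 3)
          + Polynomial.C (-(C (4 * b ^ 2) * S)) * Polynomial.X ^ (n + 1)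
          = psi K * psi (Gb b) := by
        have hc := congrArg psi hK
        simp only [map_mul, map_sub] at hc
        rw [psi_homog hr2hom, psi_homog hShom, psi_C, map_ofNat] at hc
        rw [← hc]
        simp only [map_mul, map_pow, map_neg, map_ofNat]
        ring
      set L : Polynomial (MvPolynomial (Fin 4) ℝ) :=
        Polynomial.C (4 * r2 * S) * Polynomial.X ^ (n + 3)
          + Polynomial.C (-(C (4 * b ^ 2) * S)) * Polynomial.X ^ (n + 1) with hLdef
      have hb0 : (0:ℝ) < b := lt_trans one_pos hb
      have hcoeffL : ∀ m : ℕ, L.coeff m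
          = (if m = n + 3 then 4 * r2 * S else 0)
            + (if m = n + 1 then -(C (4 * b ^ 2) * S) else 0) := by
        intro m
        rw [hLdef]
        simp only [Polynomial.coeff_add, Polynomial.coeff_C_mul, Polynomial.coeff_X_pow,
          mul_ite, mul_one, mul_zero]
      have hc0ne : -(C (4 * b ^ 2) * S) ≠ 0 := by
        refine neg_ne_zero.mpr (mul_ne_zero ?_ hSne)
        rw [Ne, MvPolynomial.C_eq_zero]
        positivity
      have hLne : L ≠ 0 := by
        intro hz
        have h := hcoeffL (n + 1)
        rw [hz, Polynomial.coeff_zero, if_neg (by omega), if_pos rfl, zero_add] at h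
        exact hc0ne h.symm
      have hqne : psi K ≠ 0 := by
        intro hz
        rw [hz, zero_mul] at hmain
        exact hLne hmain
      have hr2ne : r2 ≠ 0 := by
        intro hz
        have := congrArg (eval fun _ => (1:ℝ)) hz
        simp [hr2def] at this
        norm_num at this
      have hGpsi : psi (Gb b) = Polynomial.C (r2 ^ 2) * Polynomial.X ^ 4
          + Polynomial.C (X 3 ^ 2 - C (2 * b ^ 2) * r2) * Polynomial.X ^ 2
          + Polynomial.C (C (b ^ 4 - 1)) := by
        have hXs : ∀ i : Fin 4, psi (X i) = Polynomial.C (X i) * Polynomial.X :=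
          fun i => aeval_X _ i
        have hCb : psi (C b) = Polynomial.C (C b) := psi_C b
        rw [Gb]
        simp only [hr2def, map_sub, map_add, map_mul, map_pow, map_one, map_ofNat, hXs, hCb]
        ring
      have hGcoeff4 : (psi (Gb b)).coeff 4 = r2 ^ 2 := by
        rw [hGpsi]
        simp only [Polynomial.coeff_add, Polynomial.coeff_C_mul, Polynomial.coeff_X_pow,
          Polynomial.coeff_C]
        norm_num
      have hGcoeff0 : (psi (Gb b)).coeff 0 = C (b ^ 4 - 1) := by
        rw [hGpsi]
        simp only [Polynomial.coeff_add, Polynomial.coeff_C_mul, Polynomial.coeff_X_pow,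
          Polynomial.coeff_C]
        norm_num
      have hGne : psi (Gb b) ≠ 0 := by
        intro hz
        rw [hz] at hGcoeff4
        exact pow_ne_zero 2 hr2ne (by simpa using hGcoeff4.symm)
      have hGdeg : (psi (Gb b)).natDegree = 4 := by
        refine Polynomial.natDegree_eq_of_le_of_coeff_ne_zero ?_ ?_
        · rw [hGpsi]
          refine le_trans (Polynomial.natDegree_add_le _ _) ?_
          refine max_le (le_trans (Polynomial.natDegree_add_le _ _) (max_le ?_ ?_)) ?_
          · exact le_trans (Polynomial.natDegree_C_mul_le _ _)
              (le_of_eq (Polynomial.natDegree_X_pow 4))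
          · exact le_trans (Polynomial.natDegree_C_mul_le _ _)
              (le_trans (le_of_eq (Polynomial.natDegree_X_pow 2)) (by norm_num))
          · rw [Polynomial.natDegree_C]
            omega
        · rw [hGcoeff4]
          exact pow_ne_zero 2 hr2ne
      have hGtd : (psi (Gb b)).natTrailingDegree = 0 := by
        refine Polynomial.natTrailingDegree_eq_zero.mpr (Or.inr ?_)
        rw [hGcoeff0, Ne, MvPolynomial.C_eq_zero]
        have : (1:ℝ) < b ^ 4 := one_lt_pow₀ hb (by norm_num)
        intro h
        nlinarith
      have e1 : L.natDegree = (psi K).natDegree + 4 := by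
        rw [hmain, Polynomial.natDegree_mul hqne hGne, hGdeg]
      have e2 : L.natTrailingDegree = (psi K).natTrailingDegree := by
        rw [hmain, Polynomial.natTrailingDegree_mul hqne hGne, hGtd, add_zero]
      have e3 : L.natDegree ≤ n + 3 := by
        rw [hLdef]
        refine le_trans (Polynomial.natDegree_add_le _ _) (max_le ?_ ?_)
        · exact le_trans (Polynomial.natDegree_C_mul_le _ _)
            (le_of_eq (Polynomial.natDegree_X_pow _))
        · exact le_trans (Polynomial.natDegree_C_mul_le _ _)
            (le_trans (le_of_eq (Polynomial.natDegree_X_pow _)) (by omega))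
      have e4 : n + 1 ≤ L.natTrailingDegree := by
        refine Polynomial.le_natTrailingDegree hLne ?_
        intro m hm
        rw [hcoeffL m, if_neg (by omega), if_neg (by omega), add_zero]
      have e5 : (psi K).natTrailingDegree ≤ (psi K).natDegree :=
        Polynomial.natTrailingDegree_le_natDegree _
      omega
    exact koszul _ _ _ (by linear_combination hS0)
  · rintro ⟨A, B, C', hA, hB, hC⟩
    refine ⟨0, ?_⟩
    rw [hchi, hA, hB, hC]
    ring
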